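/- arXiv:2210.06055 — 2 statements merged into one kernel-verified Lean document; each statement's English description precedes it below -/
import Mathlib

section
/- Let m ≥ 3, α = 2↑↑(m−1), and suppose n < 3^α. Then H(n) = m if and only if n = 2^α · a for some odd a (necessarily a < 1.5^α). Moreover, if n < 3^α is not of this form, then H(n) ≤ m−1. -/
/-- Tetration base 2: `tet 0 = 1`, `tet (m+1) = 2 ^ tet m`. -/
def tet : ℕ → ℕ
  | 0 => 1
  | m + 1 => 2 ^ tet m

/-- Height of the super-factorization tree of `n`:
`H 1 = 0` and `H n = 1 + max_{p^α ∥ n} H α` for `n > 1`. -/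
def H : ℕ → ℕ
  | n =>
    if h : n ≤ 1 then 0
    else 1 + (n.primeFactors.attach.sup fun p => H (n.factorization p.1))
decreasing_by
  exact Nat.factorization_lt _ (by omega)

lemma H_one : H 1 = 0 := by rw [H]; rfl

lemma H_eq {n : ℕ} (h : 2 ≤ n) :
    H n = 1 + n.primeFactors.sup (fun p => H (n.factorization p)) := by
  rw [H]
  rw [dif_neg (by omega)]
  congr 1
  exact Finset.sup_attach n.primeFactors (fun p => H (n.factorization p))

lemma H_le {n c : ℕ} (h : ∀ p ∈ n.primeFactors, H (n.factorization p) ≤ c) :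
    H n ≤ c + 1 := by
  rcases le_or_gt n 1 with h1 | h1
  · rw [H, dif_pos h1]; omega
  · rw [H_eq h1, add_comm]
    exact Nat.add_le_add_right (Finset.sup_le fun p hp => h p hp) 1

lemma le_H {n p : ℕ} (hp : p ∈ n.primeFactors) :
    H (n.factorization p) + 1 ≤ H n := by
  have h2 : 2 ≤ n := by
    rcases Nat.mem_primeFactors.1 hp with ⟨hpp, hdvd, hne⟩
    rcases Nat.lt_or_ge n 2 with h | h
    · interval_cases n <;> simp_all
    · exact h
  rw [H_eq h2]
  have := Finset.le_sup (f := fun p => H (n.factorization p)) hp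
  omega

lemma H_zero_of_le {k : ℕ} (h : k ≤ 1) : H k = 0 := by rw [H, dif_pos h]

lemma H_le_one_of_squarefree {n : ℕ} (h : Squarefree n) : H n ≤ 1 := by
  have := H_le (n := n) (c := 0) fun p hp => by
    rw [H_zero_of_le (h.natFactorization_le_one p)]
  simpa using this

lemma H_prime_pow {p k : ℕ} (hp : p.Prime) (hk : k ≠ 0) : H (p ^ k) = 1 + H k := by
  rw [H_eq (Nat.one_lt_pow hk hp.one_lt)]
  rw [Nat.primeFactors_prime_pow hk hp]
  rw [Finset.sup_singleton, hp.factorization_pow]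
  simp

lemma H_two : H 2 = 1 := by
  have := H_prime_pow (p := 2) (k := 1) (by norm_num) one_ne_zero
  simpa [H_one] using this

lemma H_four : H 4 = 2 := by
  have := H_prime_pow (p := 2) (k := 2) (by norm_num) two_ne_zero
  norm_num [H_two] at this
  omega

lemma tet_pos : ∀ k, 1 ≤ tet k
  | 0 => le_refl 1
  | k + 1 => Nat.one_le_two_pow

lemma tet_ge_four : ∀ k, 2 ≤ k → 4 ≤ tet k
  | 2, _ => by norm_num [tet]
  | (k+3), _ => by
      have h := tet_ge_four (k+2) (by omega)
      calc (4:ℕ) ≤ 2 ^ 4 := by norm_num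
      _ ≤ 2 ^ tet (k+2) := Nat.pow_le_pow_right (by norm_num) h
      _ = tet (k+3) := rfl

lemma two_pow_succ_le : ∀ T, 2 ≤ T → 2 ^ (T + 1) ≤ 3 ^ T
  | 2, _ => by norm_num
  | (T+3), _ => by
      have h := two_pow_succ_le (T+2) (by omega)
      calc 2 ^ (T + 3 + 1) = 2 * 2 ^ (T + 2 + 1) := by ring
      _ ≤ 3 * 3 ^ (T + 2) := by omega
      _ = 3 ^ (T + 3) := by ring

lemma odd_iff_fact {n T : ℕ} (hn : n ≠ 0) :
    (∃ a : ℕ, Odd a ∧ n = 2 ^ T * a) ↔ n.factorization 2 = T := by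
  constructor
  · rintro ⟨a, ha, rfl⟩
    have ha0 : a ≠ 0 := by rintro rfl; simp at ha hn
    rw [Nat.factorization_mul (by positivity) ha0]
    have h2 : ¬ (2 ∣ a) := by
      rw [Nat.two_dvd_ne_zero, ← Nat.odd_iff]; exact ha
    simp [Nat.factorization_eq_zero_of_not_dvd h2, Nat.Prime.factorization_pow,
      Nat.prime_two]
  · intro h
    refine ⟨n / 2 ^ T, ?_, ?_⟩
    · rw [Nat.odd_iff, ← Nat.two_dvd_ne_zero, ← h]
      exact Nat.not_dvd_ordCompl Nat.prime_two hn
    · rw [← h, Nat.ordProj_mul_ordCompl_eq_self]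

lemma mem_pf_two {n : ℕ} (hn : n ≠ 0) (h : n.factorization 2 ≠ 0) :
    2 ∈ n.primeFactors := by
  rw [← Nat.support_factorization]
  exact Finsupp.mem_support_iff.2 h

lemma fact_two_pow (T : ℕ) : (2 ^ T : ℕ).factorization 2 = T := by
  simp [Nat.Prime.factorization_pow, Nat.prime_two]

lemma main : ∀ m, 3 ≤ m → ∀ n, 1 ≤ n → n < 3 ^ tet (m - 1) →
    (n.factorization 2 = tet (m - 1) → H n = m) ∧
    (n.factorization 2 ≠ tet (m - 1) → H n ≤ m - 1) := by
  intro m hm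
  induction m, hm using Nat.le_induction with
  | base =>
    intro n hn hlt
    have ht : tet (3 - 1) = 4 := rfl
    rw [ht] at hlt
    have hlt81 : n < 81 := by norm_num at hlt; exact hlt
    -- exponent bounds
    have hexp : ∀ p ∈ n.primeFactors, n.factorization p ≤ 6 ∧
        (p ≠ 2 → n.factorization p ≠ 4) := by
      intro p hp
      obtain ⟨hpp, hdvd, hne⟩ := Nat.mem_primeFactors.1 hp
      have hle : p ^ n.factorization p ≤ n :=
        Nat.le_of_dvd (by omega) (Nat.ordProj_dvd n p)
      have h2p : 2 ≤ p := hpp.two_le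
      constructor
      · by_contra hc
        have h2 : (2:ℕ) ^ 7 ≤ p ^ n.factorization p :=
          (Nat.pow_le_pow_left h2p 7).trans
            (Nat.pow_le_pow_right (by omega) (by omega))
        norm_num at h2; omega
      · intro hp2 hc
        have h3 : (3:ℕ) ^ 4 ≤ p ^ n.factorization p := by
          rw [hc]; exact Nat.pow_le_pow_left (by omega) 4
        norm_num at h3; omega
    -- H of small exponents
    have hHv : ∀ v : ℕ, v ≤ 6 → H v ≤ 2 ∧ (v ≠ 4 → H v ≤ 1) := by
      intro v hv
      interval_cases v
      · simp [H_zero_of_le]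
      · simp [H_zero_of_le]
      · have := H_le_one_of_squarefree (n := 2) Nat.prime_two.squarefree; omega
      · have := H_le_one_of_squarefree (n := 3) Nat.prime_three.squarefree; omega
      · rw [H_four]; omega
      · have := H_le_one_of_squarefree (n := 5) (by norm_num : Nat.Prime 5).squarefree; omega
      · have := H_le_one_of_squarefree (n := 6) (by
          rw [show (6:ℕ) = 2*3 from rfl, Nat.squarefree_mul (by norm_num)]
          exact ⟨Nat.prime_two.squarefree, Nat.prime_three.squarefree⟩); omega
    rw [ht]
    constructor
    · intro h4
      have h2mem : 2 ∈ n.primeFactors := mem_pf_two (by omega) (by omega)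
      have hlow := le_H h2mem
      rw [h4, H_four] at hlow
      have hup : H n ≤ 2 + 1 := H_le fun p hp => (hHv _ (hexp p hp).1).1
      omega
    · intro h4
      have hup : H n ≤ 1 + 1 := H_le fun p hp => by
        rcases eq_or_ne p 2 with rfl | hp2
        · exact (hHv _ (hexp 2 hp).1).2 h4
        · exact (hHv _ (hexp p hp).1).2 ((hexp p hp).2 hp2)
      omega
  | succ m hm ih =>
    intro n hn hlt
    set T := tet (m - 1) with hTdef
    have hmT : tet (m + 1 - 1) = 2 ^ T := by
      have : m + 1 - 1 = (m - 1) + 1 := by omega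
      rw [this]; rfl
    rw [hmT] at hlt ⊢
    have hT4 : 4 ≤ T := tet_ge_four (m - 1) (by omega)
    have h23 : 2 ^ (T + 1) ≤ 3 ^ T := two_pow_succ_le T (by omega)
    have h2T3T : (2:ℕ) ^ T < 3 ^ T := Nat.pow_lt_pow_left (by norm_num) (by omega)
    -- all odd prime exponents have small H
    have hodd : ∀ p ∈ n.primeFactors, p ≠ 2 → H (n.factorization p) ≤ m - 1 := by
      intro p hp hp2
      obtain ⟨hpp, hdvd, hne⟩ := Nat.mem_primeFactors.1 hp
      set v := n.factorization p with hv
      have hv1 : 1 ≤ v := (Nat.Prime.factorization_pos_of_dvd hpp (by omega) hdvd)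
      have hle : p ^ v ≤ n := Nat.le_of_dvd (by omega) (Nat.ordProj_dvd n p)
      have h3p : 3 ≤ p := by have := hpp.two_le; omega
      have hvT' : v < 2 ^ T := by
        by_contra hc
        have : (3:ℕ) ^ (2 ^ T) ≤ p ^ v :=
          (Nat.pow_le_pow_left h3p _).trans (Nat.pow_le_pow_right (by omega) (by omega))
        omega
      have hvlt : v < 3 ^ T := lt_of_lt_of_le hvT' (Nat.pow_le_pow_left (by norm_num) T)
      refine (ih v hv1 hvlt).2 ?_
      intro hc
      have : 2 ^ T ∣ v := by
        rw [← hc]; exact Nat.ordProj_dvd v 2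
      have := Nat.le_of_dvd (by omega) this
      omega
    -- the exponent of 2
    have h2bound : n.factorization 2 < 2 ^ (T + 1) := by
      have hle : 2 ^ n.factorization 2 ≤ n := Nat.le_of_dvd (by omega) (Nat.ordProj_dvd n 2)
      have h34 : (3:ℕ) ^ (2 ^ T) ≤ 2 ^ (2 * 2 ^ T) := by
        rw [pow_mul]; exact Nat.pow_le_pow_left (by norm_num) _
      have : (2:ℕ) ^ n.factorization 2 < 2 ^ (2 * 2 ^ T) := by omega
      have hlt2 := (Nat.pow_lt_pow_iff_right (a := 2) (by norm_num)).1 this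
      have h2T1 : 2 ^ (T + 1) = 2 * 2 ^ T := by ring
      omega
    constructor
    · intro hfact
      have h2mem : 2 ∈ n.primeFactors := mem_pf_two (by omega)
        (by rw [hfact]; exact (pow_pos (by norm_num) T).ne')
      have hHv2 : H (n.factorization 2) = m := by
        rw [hfact]
        exact (ih (2 ^ T) Nat.one_le_two_pow h2T3T).1 (fact_two_pow T)
      have hlow := le_H h2mem
      rw [hHv2] at hlow
      have hup : H n ≤ m + 1 := H_le fun p hp => by
        rcases eq_or_ne p 2 with rfl | hp2
        · omega
        · have := hodd p hp hp2; omega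
      omega
    · intro hfact
      have hup : H n ≤ (m - 1) + 1 := H_le fun p hp => by
        rcases eq_or_ne p 2 with rfl | hp2
        · -- exponent of 2 is ≥ 1 here
          set v := n.factorization 2 with hv
          have hv1 : v ≠ 0 := by
            obtain ⟨hpp, hdvd, hne⟩ := Nat.mem_primeFactors.1 hp
            exact (Nat.Prime.factorization_pos_of_dvd hpp (by omega) hdvd).ne'
          have hvlt : v < 3 ^ T := by
            have := Nat.pow_le_pow_left (show (2:ℕ) ≤ 3 by norm_num) T
            omega
          refine (ih v (by omega) hvlt).2 ?_
          intro hc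
          obtain ⟨a, ha, hva⟩ := (odd_iff_fact hv1).2 hc
          have ha1 : a = 1 := by
            rcases ha with ⟨b, rfl⟩
            have h2T1 : 2 ^ (T + 1) = 2 * 2 ^ T := by ring
            nlinarith [pow_pos (show 0 < 2 by norm_num) T]
          rw [ha1, mul_one] at hva
          exact hfact (by rw [hv] at hva; omega)
        · exact hodd p hp hp2
      omega

theorem stmt7 (m : ℕ) (hm : 3 ≤ m) (n : ℕ) (hn : 1 ≤ n)
    (hlt : n < 3 ^ tet (m - 1)) :
    (H n = m ↔ ∃ a : ℕ, Odd a ∧ n = 2 ^ tet (m - 1) * a) ∧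
      ((¬ ∃ a : ℕ, Odd a ∧ n = 2 ^ tet (m - 1) * a) → H n ≤ m - 1) := by
  have key := main m hm n hn hlt
  have hiff := odd_iff_fact (n := n) (T := tet (m - 1)) (by omega)
  refine ⟨⟨fun hH => ?_, fun he => key.1 (hiff.1 he)⟩,
    fun he => key.2 fun hc => he (hiff.2 hc)⟩
  by_contra hc
  have := key.2 fun h => hc (hiff.2 h)
  omega
end

section
/- Let D_k = lim_{x→∞} #{n ≤ x : H(n) ≥ k}/x (which exists). Then for all k ≥ 1 and all sufficiently large x, D_k(x) := #{n ≤ x : H(n) ≥ k} ≤ 4x/(2↑↑k), and consequently D_k ≤ 4/(2↑↑k). -/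
lemma tet_pos_s12 (k : ℕ) : 0 < tet k := by
  cases k with
  | zero => simp [tet]
  | succ m => exact Nat.pow_pos (by norm_num)

lemma H_le_one (n : ℕ) (h : n ≤ 1) : H n = 0 := by rw [H]; simp [h]

lemma H_gt (n : ℕ) (h : 1 < n) :
    H n = 1 + (n.primeFactors.attach.sup fun p => H (n.factorization p.1)) := by
  rw [H]; simp [Nat.not_le.mpr h, h.not_ge]

lemma H_lower : ∀ j n, 1 ≤ n → j ≤ H n → tet j ≤ n := by
  intro j
  induction j with
  | zero => intro n hn _; simpa [tet] using hn
  | succ j ih =>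
    intro n hn hj
    have hn1 : 1 < n := by
      by_contra h
      rw [H_le_one n (by omega)] at hj; omega
    rw [H_gt n hn1] at hj
    have hsup : j ≤ n.primeFactors.attach.sup fun p => H (n.factorization p.1) := by omega
    have hne : n.primeFactors.attach.Nonempty := by
      rw [Finset.attach_nonempty_iff]
      exact Nat.nonempty_primeFactors.mpr hn1
    obtain ⟨p, hp, hpe⟩ := Finset.exists_mem_eq_sup _ hne fun p => H (n.factorization p.1)
    have hj' : j ≤ H (n.factorization p.1) := by rw [← hpe]; exact hsup
    have hpmem : p.1 ∈ n.primeFactors := p.2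
    have hα : 1 ≤ n.factorization p.1 := by
      have : n.factorization p.1 ≠ 0 := Finsupp.mem_support_iff.mp (by rwa [Nat.support_factorization])
      omega
    have htj : tet j ≤ n.factorization p.1 := ih _ hα hj'
    have hdvd : p.1 ^ n.factorization p.1 ∣ n := Nat.ordProj_dvd n p.1
    have hp2 : 2 ≤ p.1 := (Nat.prime_of_mem_primeFactors hpmem).two_le
    calc tet (j+1) = 2 ^ tet j := rfl
    _ ≤ p.1 ^ n.factorization p.1 := by
        calc 2 ^ tet j ≤ p.1 ^ tet j := Nat.pow_le_pow_left hp2 _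
        _ ≤ p.1 ^ n.factorization p.1 := Nat.pow_le_pow_right (by omega) htj
    _ ≤ n := Nat.le_of_dvd (by omega) hdvd

/-- A witness divisor: if `k ≤ H n` with `k ≥ 1, n ≥ 1`, some `m ∈ [2,n]` has `m ^ tet (k-1) ∣ n`. -/
lemma exists_witness (k n : ℕ) (hk : 1 ≤ k) (hn : 1 ≤ n) (h : k ≤ H n) :
    ∃ m, 2 ≤ m ∧ m ≤ n ∧ m ^ tet (k-1) ∣ n := by
  have hn1 : 1 < n := by
    by_contra hc
    rw [H_le_one n (by omega)] at h; omega
  rw [H_gt n hn1] at h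
  have hsup : k - 1 ≤ n.primeFactors.attach.sup fun p => H (n.factorization p.1) := by omega
  have hne : n.primeFactors.attach.Nonempty := by
    rw [Finset.attach_nonempty_iff]
    exact Nat.nonempty_primeFactors.mpr hn1
  obtain ⟨p, hp, hpe⟩ := Finset.exists_mem_eq_sup _ hne fun p => H (n.factorization p.1)
  have hj' : k - 1 ≤ H (n.factorization p.1) := by rw [← hpe]; exact hsup
  have hpmem : p.1 ∈ n.primeFactors := p.2
  have hα : 1 ≤ n.factorization p.1 := by
    have : n.factorization p.1 ≠ 0 := Finsupp.mem_support_iff.mp (by rwa [Nat.support_factorization])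
    omega
  have htj : tet (k-1) ≤ n.factorization p.1 := H_lower _ _ hα hj'
  have hdvd : p.1 ^ n.factorization p.1 ∣ n := Nat.ordProj_dvd n p.1
  have hp2 : 2 ≤ p.1 := (Nat.prime_of_mem_primeFactors hpmem).two_le
  refine ⟨p.1, hp2, ?_, dvd_trans (pow_dvd_pow _ htj) hdvd⟩
  exact Nat.le_of_dvd (by omega) (Nat.dvd_of_mem_primeFactors hpmem)

lemma sum_inv_sq_le (x : ℕ) : ∑ m ∈ Finset.Icc 2 x, (1:ℝ)/(m:ℝ)^2 ≤ 1 := by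
  have key : ∀ x : ℕ, 1 ≤ x → ∑ m ∈ Finset.Icc 2 x, (1:ℝ)/(m:ℝ)^2 ≤ 1 - 1/(x:ℝ) := by
    intro x hx
    induction x with
    | zero => omega
    | succ n ih =>
      rcases Nat.lt_or_ge n 1 with h | h
      · interval_cases n
        · simp
      · have hins : Finset.Icc 2 (n+1) = insert (n+1) (Finset.Icc 2 n) := by
          rw [Finset.insert_Icc_right_eq_Icc_add_one (by omega)]
        rw [hins, Finset.sum_insert (by simp)]
        have hn : (1:ℝ) ≤ n := by exact_mod_cast h
        have h1 : (0:ℝ) < n := by linarith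
        have h2 : (0:ℝ) < (n:ℝ)+1 := by linarith
        have : (1:ℝ)/((n:ℝ)+1)^2 ≤ 1/(n:ℝ) - 1/((n:ℝ)+1) := by
          rw [div_sub_div _ _ (ne_of_gt h1) (ne_of_gt h2)]
          rw [div_le_div_iff₀ (by positivity) (by positivity)]
          ring_nf
          nlinarith
        have := ih h
        push_cast
        linarith
  rcases Nat.lt_or_ge x 1 with h | h
  · interval_cases x; simp
  · have : (0:ℝ) < 1/(x:ℝ) := by positivity
    linarith [key x h]

lemma sum_inv_pow_le (T x : ℕ) (hT : 2 ≤ T) :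
    ∑ m ∈ Finset.Icc 2 x, (1:ℝ)/(m:ℝ)^T ≤ 4/(2:ℝ)^T := by
  have step : ∀ m ∈ Finset.Icc 2 x, (1:ℝ)/(m:ℝ)^T ≤ (4/(2:ℝ)^T) * (1/(m:ℝ)^2) := by
    intro m hm
    have hm2 : 2 ≤ m := (Finset.mem_Icc.mp hm).1
    have hmr : (2:ℝ) ≤ (m:ℝ) := by exact_mod_cast hm2
    have h1 : (2:ℝ)^(T-2) ≤ (m:ℝ)^(T-2) := pow_le_pow_left₀ (by norm_num) hmr _
    have hms : (m:ℝ)^T = (m:ℝ)^(T-2) * (m:ℝ)^2 := by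
      rw [← pow_add]; congr 1; omega
    have h2s : (2:ℝ)^T = (2:ℝ)^(T-2) * 4 := by
      rw [show (4:ℝ) = 2^2 by norm_num, ← pow_add]; congr 1; omega
    rw [hms, h2s, div_mul_eq_mul_div, mul_one_div, div_div]
    rw [div_le_div_iff₀ (by positivity) (by positivity)]
    nlinarith [sq_nonneg (m:ℝ), pow_nonneg (by norm_num : (0:ℝ) ≤ 2) (T-2), pow_pos (by norm_num : (0:ℝ) < 2) (T-2)]
  calc ∑ m ∈ Finset.Icc 2 x, (1:ℝ)/(m:ℝ)^T ≤ ∑ m ∈ Finset.Icc 2 x, (4/(2:ℝ)^T) * (1/(m:ℝ)^2) :=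
        Finset.sum_le_sum step
  _ = (4/(2:ℝ)^T) * ∑ m ∈ Finset.Icc 2 x, (1:ℝ)/(m:ℝ)^2 := by rw [Finset.mul_sum]
  _ ≤ (4/(2:ℝ)^T) * 1 := mul_le_mul_of_nonneg_left (sum_inv_sq_le x) (by positivity)
  _ = 4/(2:ℝ)^T := by ring

/-- The main counting bound, valid for every `x`. -/
lemma main_bound (k x : ℕ) (hk : 1 ≤ k) :
    (((Finset.Icc 1 x).filter fun n => k ≤ H n).card : ℝ) ≤ 4 * x / tet k := by
  rcases Nat.lt_or_ge k 2 with hk2 | hk2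
  · -- k = 1 : card ≤ x, tet 1 = 2
    have h1 : k = 1 := by omega
    subst h1
    have hc : ((Finset.Icc 1 x).filter fun n => 1 ≤ H n).card ≤ x := by
      calc _ ≤ (Finset.Icc 1 x).card := Finset.card_filter_le _ _
      _ = x := by rw [Nat.card_Icc]; omega
    have : (tet 1 : ℝ) = 2 := by norm_num [tet]
    rw [this]
    have hcr : (((Finset.Icc 1 x).filter fun n => 1 ≤ H n).card : ℝ) ≤ x := by exact_mod_cast hc
    have hx0 : (0:ℝ) ≤ x := Nat.cast_nonneg x
    linarith
  · set T := tet (k-1) with hT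
    have hT2 : 2 ≤ T := by
      have : k - 1 ≥ 1 := by omega
      calc 2 = tet 1 := by norm_num [tet]
      _ ≤ tet (k-1) := by
          have mono : ∀ a b, a ≤ b → tet a ≤ tet b := by
            intro a b hab
            induction b with
            | zero => simp_all
            | succ m ih =>
              rcases Nat.lt_or_ge a (m+1) with h | h
              · calc tet a ≤ tet m := ih (by omega)
                _ ≤ 2 ^ tet m := Nat.le_of_lt Nat.lt_two_pow_self
                _ = tet (m+1) := rfl
              · have : a = m + 1 := by omega
                subst this; rfl
          exact mono 1 (k-1) this
    have htk : tet k = 2 ^ T := by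
      have : k = (k-1) + 1 := by omega
      rw [this]; rfl
    -- subset of biUnion
    have hsub : (Finset.Icc 1 x).filter (fun n => k ≤ H n) ⊆
        (Finset.Icc 2 x).biUnion fun m => (Finset.Icc 1 x).filter fun n => m ^ T ∣ n := by
      intro n hn
      rw [Finset.mem_filter] at hn
      obtain ⟨hmem, hH⟩ := hn
      rw [Finset.mem_Icc] at hmem
      obtain ⟨m, hm2, hmn, hdvd⟩ := exists_witness k n hk hmem.1 hH
      rw [Finset.mem_biUnion]
      exact ⟨m, Finset.mem_Icc.mpr ⟨hm2, le_trans hmn hmem.2⟩,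
        Finset.mem_filter.mpr ⟨Finset.mem_Icc.mpr hmem, hdvd⟩⟩
    have hcard : ((Finset.Icc 1 x).filter fun n => k ≤ H n).card ≤
        ∑ m ∈ Finset.Icc 2 x, x / m ^ T := by
      calc _ ≤ ((Finset.Icc 2 x).biUnion fun m => (Finset.Icc 1 x).filter fun n => m ^ T ∣ n).card :=
            Finset.card_le_card hsub
      _ ≤ ∑ m ∈ Finset.Icc 2 x, ((Finset.Icc 1 x).filter fun n => m ^ T ∣ n).card :=
            Finset.card_biUnion_le
      _ = ∑ m ∈ Finset.Icc 2 x, x / m ^ T := by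
            apply Finset.sum_congr rfl
            intro m hm
            have : Finset.Icc 1 x = Finset.Ioc 0 x := rfl
            rw [this, Nat.Ioc_filter_dvd_card_eq_div]
    have hreal : (((Finset.Icc 1 x).filter fun n => k ≤ H n).card : ℝ) ≤
        ∑ m ∈ Finset.Icc 2 x, (x : ℝ) / (m : ℝ) ^ T := by
      calc _ ≤ ((∑ m ∈ Finset.Icc 2 x, x / m ^ T : ℕ) : ℝ) := by exact_mod_cast hcard
      _ = ∑ m ∈ Finset.Icc 2 x, ((x / m ^ T : ℕ) : ℝ) := by push_cast; ring
      _ ≤ ∑ m ∈ Finset.Icc 2 x, (x : ℝ) / (m : ℝ) ^ T := by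
          apply Finset.sum_le_sum
          intro m hm
          have := Nat.cast_div_le (α := ℝ) (m := x) (n := m ^ T)
          simpa [Nat.cast_pow] using this
    calc (((Finset.Icc 1 x).filter fun n => k ≤ H n).card : ℝ)
        ≤ ∑ m ∈ Finset.Icc 2 x, (x : ℝ) / (m : ℝ) ^ T := hreal
    _ = (x : ℝ) * ∑ m ∈ Finset.Icc 2 x, (1:ℝ) / (m : ℝ) ^ T := by
        rw [Finset.mul_sum]; apply Finset.sum_congr rfl; intro m _; ring
    _ ≤ (x : ℝ) * (4 / (2:ℝ)^T) := by
        apply mul_le_mul_of_nonneg_left (sum_inv_pow_le T x hT2) (Nat.cast_nonneg x)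
    _ = 4 * x / tet k := by
        rw [htk]; push_cast; ring

theorem stmt12 :
    ∃ x₀ : ℕ, ∀ k : ℕ, 1 ≤ k →
      (∀ x : ℕ, x₀ ≤ x →
        (((Finset.Icc 1 x).filter fun n => k ≤ H n).card : ℝ) ≤ 4 * x / tet k) ∧
      (∀ D : ℝ,
        Filter.Tendsto
          (fun x : ℕ => (((Finset.Icc 1 x).filter fun n => k ≤ H n).card : ℝ) / x)
          Filter.atTop (nhds D) →
        D ≤ 4 / tet k) := by
  refine ⟨1, fun k hk => ⟨fun x _ => main_bound k x hk, fun D hD => ?_⟩⟩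
  apply le_of_tendsto hD
  rw [Filter.eventually_atTop]
  refine ⟨1, fun x hx => ?_⟩
  have hx0 : (0:ℝ) < x := by exact_mod_cast hx
  have h := main_bound k x hk
  rw [div_le_iff₀ hx0]
  calc (((Finset.Icc 1 x).filter fun n => k ≤ H n).card : ℝ) ≤ 4 * x / tet k := h
  _ = 4 / tet k * x := by ring
end
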